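/- arXiv:1402.5480 — 5 statements merged into one kernel-verified Lean document; each statement's English description precedes it below -/
import Mathlib

section
/- Let M ∈ ℂ^{p×p} and B ∈ ℂ^{q×q} be Hermitian positive definite, E ∈ ℂ^{p×q}, and ω₁, ω₂ scalars. Consider A = [[M, E], [-Eᴴ, 0]] and the preconditioner B(ω₁,ω₂) = [[M, 0], [-ω₁Eᴴ, B]] · diag(M⁻¹, B⁻¹) · [[M, ω₂E], [0, B]]. Then null((B(ω₁,ω₂)⁻¹ A)²) = null(B(ω₁,ω₂)⁻¹ A), i.e., index(I - G) = 1 for the iteration matrix G = I - τ B(ω₁,ω₂)⁻¹ A with τ ≠ 0. -/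
open Matrix
open scoped ComplexOrder

theorem stmt5 {p q : ℕ} (M : Matrix (Fin p) (Fin p) ℂ) (hM : M.PosDef)
    (B : Matrix (Fin q) (Fin q) ℂ) (hB : B.PosDef)
    (E : Matrix (Fin p) (Fin q) ℂ) (ω₁ ω₂ τ : ℂ) (hτ : τ ≠ 0) :
    let A : Matrix (Fin p ⊕ Fin q) (Fin p ⊕ Fin q) ℂ := fromBlocks M E (-Eᴴ) 0
    let Bc : Matrix (Fin p ⊕ Fin q) (Fin p ⊕ Fin q) ℂ := fromBlocks M 0 0 B
    let KL : Matrix (Fin p ⊕ Fin q) (Fin p ⊕ Fin q) ℂ := fromBlocks 0 0 (-Eᴴ) 0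
    let KU : Matrix (Fin p ⊕ Fin q) (Fin p ⊕ Fin q) ℂ := fromBlocks 0 E 0 0
    let Bw : Matrix (Fin p ⊕ Fin q) (Fin p ⊕ Fin q) ℂ :=
      (Bc + ω₁ • KL) * Bc⁻¹ * (Bc + ω₂ • KU)
    {x : Fin p ⊕ Fin q → ℂ | ((Bw⁻¹ * A) * (Bw⁻¹ * A)).mulVec x = 0} =
      {x : Fin p ⊕ Fin q → ℂ | (Bw⁻¹ * A).mulVec x = 0} := by
  intro A Bc KL KU Bw
  have hMdet : IsUnit M.det := (hM.det_pos.ne').isUnit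
  have hBdet : IsUnit B.det := (hB.det_pos.ne').isUnit
  -- Bc is invertible
  have hBcdet : IsUnit Bc.det := by
    show IsUnit (fromBlocks M 0 0 B).det
    rw [det_fromBlocks_zero₂₁]
    exact hMdet.mul hBdet
  -- L = Bc + ω₁ • KL is block lower triangular
  have hL : Bc + ω₁ • KL = fromBlocks M 0 (ω₁ • (-Eᴴ)) B := by
    show fromBlocks M 0 0 B + ω₁ • fromBlocks 0 0 (-Eᴴ) 0 = _
    ext i j
    rcases i with i | i <;> rcases j with j | j <;>
      simp [fromBlocks]
  have hU : Bc + ω₂ • KU = fromBlocks M (ω₂ • E) 0 B := by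
    show fromBlocks M 0 0 B + ω₂ • fromBlocks 0 E 0 0 = _
    ext i j
    rcases i with i | i <;> rcases j with j | j <;>
      simp [fromBlocks]
  have hLdet : IsUnit (Bc + ω₁ • KL).det := by
    rw [hL, det_fromBlocks_zero₁₂]; exact hMdet.mul hBdet
  have hUdet : IsUnit (Bc + ω₂ • KU).det := by
    rw [hU, det_fromBlocks_zero₂₁]; exact hMdet.mul hBdet
  have hBwdet : IsUnit Bw.det := by
    show IsUnit ((Bc + ω₁ • KL) * Bc⁻¹ * (Bc + ω₂ • KU)).det
    rw [det_mul, det_mul, det_nonsing_inv, Ring.inverse_eq_inv]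
    exact (hLdet.mul hBcdet.inv).mul hUdet
  ext x
  simp only [Set.mem_setOf_eq]
  constructor
  · intro h
    set y : Fin p ⊕ Fin q → ℂ := (Bw⁻¹ * A) *ᵥ x with hy_def
    have hy0 : (Bw⁻¹ * A) *ᵥ y = 0 := by
      rw [hy_def, mulVec_mulVec]; exact h
    have key : ∀ z : Fin p ⊕ Fin q → ℂ, Bw *ᵥ ((Bw⁻¹ * A) *ᵥ z) = A *ᵥ z := by
      intro z
      rw [mulVec_mulVec, ← Matrix.mul_assoc, Matrix.mul_nonsing_inv _ hBwdet,
        Matrix.one_mul]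
    have hAy : A *ᵥ y = 0 := by
      have := key y
      rw [hy0] at this
      rw [← this, mulVec_zero]
    have hBwy : Bw *ᵥ y = A *ᵥ x := key x
    -- decompose y into blocks
    set u : Fin p → ℂ := y ∘ Sum.inl with hu_def
    set v : Fin q → ℂ := y ∘ Sum.inr with hv_def
    have hyelim : y = u ⊕ᵥ v := (Sum.elim_comp_inl_inr y).symm
    -- from A y = 0
    have hAy' : (M *ᵥ u + E *ᵥ v) ⊕ᵥ ((-Eᴴ) *ᵥ u + (0 : Matrix _ _ ℂ) *ᵥ v)
        = (0 : Fin p ⊕ Fin q → ℂ) := by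
      rw [← fromBlocks_mulVec]; exact hAy
    have h1 : M *ᵥ u + E *ᵥ v = 0 := by
      funext i; exact congrFun hAy' (Sum.inl i)
    have h2 : Eᴴ *ᵥ u = 0 := by
      have h2' : (-Eᴴ) *ᵥ u + (0 : Matrix _ _ ℂ) *ᵥ v = 0 := by
        funext i; exact congrFun hAy' (Sum.inr i)
      rw [zero_mulVec, add_zero, neg_mulVec, neg_eq_zero] at h2'
      exact h2'
    -- u = 0 using posdef of M
    have hu0 : u = 0 := by
      by_contra hne
      have hpos := hM.dotProduct_mulVec_pos hne
      have hdot : star u ⬝ᵥ M *ᵥ u = 0 := by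
        have hMu : M *ᵥ u = -(E *ᵥ v) := by
          rw [eq_neg_iff_add_eq_zero]; exact h1
        rw [hMu, dotProduct_neg, dotProduct_mulVec]
        have hstar : star u ᵥ* E = 0 := by
          have := congrArg star h2
          rw [star_mulVec, conjTranspose_conjTranspose] at this
          simpa using this
        rw [hstar, zero_dotProduct, neg_zero]
      rw [hdot] at hpos
      exact lt_irrefl _ hpos
    have hEv : E *ᵥ v = 0 := by
      rw [hu0, mulVec_zero, zero_add] at h1; exact h1
    -- KL y = 0 and KU y = 0
    have hKLy : KL *ᵥ y = 0 := by
      show fromBlocks 0 0 (-Eᴴ) 0 *ᵥ y = 0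
      rw [fromBlocks_mulVec]
      funext i
      rcases i with i | i <;>
        simp [← hu_def, ← hv_def, hu0]
    have hKUy : KU *ᵥ y = 0 := by
      show fromBlocks 0 E 0 0 *ᵥ y = 0
      rw [fromBlocks_mulVec]
      funext i
      rcases i with i | i <;>
        simp [← hu_def, ← hv_def, hEv]
    -- Bw y = Bc y
    have hBwBc : Bw *ᵥ y = Bc *ᵥ y := by
      show ((Bc + ω₁ • KL) * Bc⁻¹ * (Bc + ω₂ • KU)) *ᵥ y = _
      rw [← mulVec_mulVec, ← mulVec_mulVec]
      rw [add_mulVec Bc (ω₂ • KU) y, smul_mulVec, hKUy, smul_zero, add_zero]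
      rw [mulVec_mulVec, mulVec_mulVec, Matrix.mul_assoc,
        Matrix.nonsing_inv_mul _ hBcdet, Matrix.mul_one]
      rw [add_mulVec Bc (ω₁ • KL) y, smul_mulVec, hKLy, smul_zero, add_zero]
    have hBcy : Bc *ᵥ y = A *ᵥ x := by rw [← hBwBc]; exact hBwy
    -- take inner product with y
    have hdot2 : star v ⬝ᵥ B *ᵥ v = 0 := by
      have lhs : star y ⬝ᵥ Bc *ᵥ y = star v ⬝ᵥ B *ᵥ v := by
        conv_lhs => rw [hyelim, hu0]
        show star ((0 : Fin p → ℂ) ⊕ᵥ v) ⬝ᵥ (fromBlocks M 0 0 B *ᵥ ((0 : Fin p → ℂ) ⊕ᵥ v)) = _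
        have hstarelim : star ((0 : Fin p → ℂ) ⊕ᵥ v) = (0 : Fin p → ℂ) ⊕ᵥ star v := by
          funext i; rcases i with i | i <;> simp
        rw [hstarelim, fromBlocks_mulVec]
        simp [sumElim_dotProduct_sumElim]
      have rhs : star y ⬝ᵥ A *ᵥ x = 0 := by
        rw [dotProduct_mulVec]
        have : star y ᵥ* A = 0 := by
          conv_lhs => rw [hyelim, hu0]
          show star ((0 : Fin p → ℂ) ⊕ᵥ v) ᵥ* fromBlocks M E (-Eᴴ) 0 = 0
          have hstarelim : star ((0 : Fin p → ℂ) ⊕ᵥ v) = (0 : Fin p → ℂ) ⊕ᵥ star v := by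
            funext i; rcases i with i | i <;> simp
          rw [hstarelim, vecMul_fromBlocks]
          have hvE : star v ᵥ* Eᴴ = 0 := by
            have := congrArg star hEv
            rw [star_mulVec] at this
            simpa using this
          funext i
          rcases i with i | i <;>
            simp [Matrix.vecMul_neg, hvE]
        rw [this, zero_dotProduct]
      rw [← lhs, hBcy, rhs]
    have hv0 : v = 0 := by
      by_contra hne
      have hpos := hB.dotProduct_mulVec_pos hne
      rw [hdot2] at hpos
      exact lt_irrefl _ hpos
    have hy0' : y = 0 := by
      rw [hyelim, hu0, hv0]
      funext i; rcases i with i | i <;> simp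
    exact hy0'
  · intro h
    rw [← mulVec_mulVec, h, mulVec_zero]
end

section
/- Let M ∈ ℂ^{p×p} be Hermitian positive definite, E ∈ ℂ^{p×q}, P ∈ ℂ^{p×p} Hermitian positive definite, B = Eᴴ P⁻¹ E, and let A = [[M, E],[-Eᴴ, 0]]. Define B(ω₁,ω₂) = [[M, ω₂E], [-ω₁Eᴴ, B - ω₁ω₂EᴴM⁻¹E]] and B(ω₁,ω₂)† = [[M⁻¹ - ω₁ω₂M⁻¹EB†EᴴM⁻¹, -ω₂M⁻¹EB†], [ω₁B†EᴴM⁻¹, B†]]. Then B(ω₁,ω₂)·B(ω₁,ω₂)†·A = A. -/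
open Matrix
open scoped ComplexOrder

theorem stmt8 {p q : ℕ} (M P : Matrix (Fin p) (Fin p) ℂ)
    (hM : M.PosDef) (hP : P.PosDef)
    (E : Matrix (Fin p) (Fin q) ℂ) (ω₁ ω₂ : ℂ)
    (B Bd : Matrix (Fin q) (Fin q) ℂ) (hB : B = Eᴴ * P⁻¹ * E)
    (h1 : B * Bd * B = B) (h2 : Bd * B * Bd = Bd)
    (h3 : (B * Bd)ᴴ = B * Bd) (h4 : (Bd * B)ᴴ = Bd * B) :
    let A : Matrix (Fin p ⊕ Fin q) (Fin p ⊕ Fin q) ℂ := fromBlocks M E (-Eᴴ) 0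
    let Bw : Matrix (Fin p ⊕ Fin q) (Fin p ⊕ Fin q) ℂ :=
      fromBlocks M (ω₂ • E) (-(ω₁ • Eᴴ)) (B - (ω₁ * ω₂) • (Eᴴ * M⁻¹ * E))
    let Bwd : Matrix (Fin p ⊕ Fin q) (Fin p ⊕ Fin q) ℂ :=
      fromBlocks (M⁻¹ - (ω₁ * ω₂) • (M⁻¹ * E * Bd * Eᴴ * M⁻¹)) (-(ω₂ • (M⁻¹ * E * Bd)))
        (ω₁ • (Bd * Eᴴ * M⁻¹)) Bd
    Bw * Bwd * A = A := by
  intro A Bw Bwd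
  -- key identity : B * Bd * Eᴴ = Eᴴ
  have hPinv : (P⁻¹).PosDef := hP.inv
  obtain ⟨Q, hQQ, hQH⟩ : ∃ Q : Matrix (Fin p) (Fin p) ℂ, Q * Q = P⁻¹ ∧ Qᴴ = Q := by
    open scoped MatrixOrder in
    exact ⟨CFC.sqrt P⁻¹, CFC.sqrt_mul_sqrt_self _ hPinv.posSemidef.nonneg,
      (CFC.sqrt_nonneg _).posSemidef.1⟩
  set N : Matrix (Fin q) (Fin q) ℂ := 1 - B * Bd with hNdef
  have hNB : N * B = 0 := by
    simp [hNdef, Matrix.sub_mul, Matrix.mul_assoc]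
    rw [← Matrix.mul_assoc, h1]
    simp
  have hF : (N * Eᴴ * Q) * (N * Eᴴ * Q)ᴴ = 0 := by
    have : (N * Eᴴ * Q) * (N * Eᴴ * Q)ᴴ = N * B * Nᴴ := by
      rw [hB, ← hQQ]
      simp only [conjTranspose_mul, hQH, conjTranspose_conjTranspose, Matrix.mul_assoc]
    rw [this, hNB, Matrix.zero_mul]
  have hF0 : N * Eᴴ * Q = 0 := by
    rwa [Matrix.self_mul_conjTranspose_eq_zero] at hF
  have hNE : N * Eᴴ = 0 := by
    have h5 : N * Eᴴ * P⁻¹ = 0 := by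
      rw [← hQQ, ← Matrix.mul_assoc, hF0, Matrix.zero_mul]
    have := congrArg (· * P) h5
    simpa [Matrix.mul_assoc, Matrix.nonsing_inv_mul P (isUnit_iff_ne_zero.mpr hP.det_pos.ne')] using this
  have hkey : B * Bd * Eᴴ = Eᴴ := by
    have : (1 - B * Bd) * Eᴴ = 0 := hNE
    rw [Matrix.sub_mul, Matrix.one_mul, sub_eq_zero] at this
    exact this.symm
  -- invertibility of M
  have hMM : M * M⁻¹ = 1 := Matrix.mul_nonsing_inv M (isUnit_iff_ne_zero.mpr hM.det_pos.ne')
  have hMM' : M⁻¹ * M = 1 := Matrix.nonsing_inv_mul M (isUnit_iff_ne_zero.mpr hM.det_pos.ne')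
  -- block computations
  show (fromBlocks M (ω₂ • E) (-(ω₁ • Eᴴ)) (B - (ω₁ * ω₂) • (Eᴴ * M⁻¹ * E))) *
      (fromBlocks (M⁻¹ - (ω₁ * ω₂) • (M⁻¹ * E * Bd * Eᴴ * M⁻¹)) (-(ω₂ • (M⁻¹ * E * Bd)))
        (ω₁ • (Bd * Eᴴ * M⁻¹)) Bd) * (fromBlocks M E (-Eᴴ) 0) = fromBlocks M E (-Eᴴ) 0
  rw [Matrix.fromBlocks_multiply, Matrix.fromBlocks_multiply]
  have c11 : M * (M⁻¹ - (ω₁ * ω₂) • (M⁻¹ * E * Bd * Eᴴ * M⁻¹)) +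
      (ω₂ • E) * (ω₁ • (Bd * Eᴴ * M⁻¹)) = 1 := by
    have hX : M * (M⁻¹ * E * Bd * Eᴴ * M⁻¹) = E * (Bd * Eᴴ * M⁻¹) := by
      simp only [← Matrix.mul_assoc, hMM, Matrix.one_mul]
    rw [Matrix.mul_sub, hMM, Matrix.mul_smul, hX, Matrix.smul_mul, Matrix.mul_smul]
    module
  have c12 : M * -(ω₂ • (M⁻¹ * E * Bd)) + (ω₂ • E) * Bd = 0 := by
    rw [Matrix.mul_neg, Matrix.mul_smul, Matrix.smul_mul]
    have : M * (M⁻¹ * E * Bd) = E * Bd := by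
      simp only [← Matrix.mul_assoc, hMM, Matrix.one_mul]
    rw [this]
    module
  have c21 : -(ω₁ • Eᴴ) * (M⁻¹ - (ω₁ * ω₂) • (M⁻¹ * E * Bd * Eᴴ * M⁻¹)) +
      (B - (ω₁ * ω₂) • (Eᴴ * M⁻¹ * E)) * (ω₁ • (Bd * Eᴴ * M⁻¹)) =
      ω₁ • (B * Bd * (Eᴴ * M⁻¹)) - ω₁ • (Eᴴ * M⁻¹) := by
    simp only [Matrix.neg_mul, Matrix.smul_mul, Matrix.mul_smul, Matrix.mul_sub,
      Matrix.sub_mul, smul_smul, smul_sub, neg_sub]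
    have e1 : Eᴴ * (M⁻¹ * E * Bd * Eᴴ * M⁻¹) = Eᴴ * M⁻¹ * E * (Bd * (Eᴴ * M⁻¹)) := by
      simp [Matrix.mul_assoc]
    have e2 : Eᴴ * M⁻¹ * E * (Bd * Eᴴ * M⁻¹) = Eᴴ * M⁻¹ * E * (Bd * (Eᴴ * M⁻¹)) := by
      simp [Matrix.mul_assoc]
    have e3 : B * (Bd * Eᴴ * M⁻¹) = B * Bd * (Eᴴ * M⁻¹) := by
      simp [Matrix.mul_assoc]
    rw [e1, e2, e3]
    ring_nf
    module
  have c22 : -(ω₁ • Eᴴ) * -(ω₂ • (M⁻¹ * E * Bd)) + (B - (ω₁ * ω₂) • (Eᴴ * M⁻¹ * E)) * Bd =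
      B * Bd := by
    simp only [Matrix.neg_mul, Matrix.mul_neg, neg_neg, Matrix.smul_mul, Matrix.mul_smul,
      Matrix.sub_mul, smul_smul]
    have e1 : Eᴴ * (M⁻¹ * E * Bd) = Eᴴ * M⁻¹ * E * Bd := by simp [Matrix.mul_assoc]
    rw [e1]
    module
  rw [c11, c12, c21, c22]
  have hEM : (ω₁ • (B * Bd * (Eᴴ * M⁻¹)) - ω₁ • (Eᴴ * M⁻¹)) = 0 := by
    have : B * Bd * (Eᴴ * M⁻¹) = Eᴴ * M⁻¹ := by
      rw [← Matrix.mul_assoc, hkey]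
    rw [this, sub_self]
  rw [hEM]
  simp [Matrix.mul_neg, hkey]
end

section
/- Under the same setting (M Hermitian positive definite, B = EᴴP⁻¹E with P Hermitian positive definite, A = [[M,E],[-Eᴴ,0]], G = I - τ B(ω₁,ω₂)†A with τ ≠ 0), null((B(ω₁,ω₂)†A)²) = null(B(ω₁,ω₂)†A), i.e., index(I - G) = 1. -/
open Matrix
open scoped ComplexOrder

/-- From positive definiteness of `P` and the Penrose identity `B * Bd * B = B`,
we get `E * (Bd * B) = E` where `B = Eᴴ * P⁻¹ * E`. -/
lemma stmt10_aux1 {p q : ℕ} (P : Matrix (Fin p) (Fin p) ℂ) (hP : P.PosDef)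
    (E : Matrix (Fin p) (Fin q) ℂ) (B Bd : Matrix (Fin q) (Fin q) ℂ)
    (hB : B = Eᴴ * P⁻¹ * E) (h1 : B * Bd * B = B) :
    E * (Bd * B) = E := by
  have h5 : B * (1 - Bd * B) = 0 := by
    rw [mul_sub, mul_one, ← mul_assoc, h1, sub_self]
  have hC : (E * (1 - Bd * B))ᴴ * P⁻¹ * (E * (1 - Bd * B)) = 0 := by
    calc (E * (1 - Bd * B))ᴴ * P⁻¹ * (E * (1 - Bd * B))
        = (1 - Bd * B)ᴴ * ((Eᴴ * P⁻¹ * E) * (1 - Bd * B)) := by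
          rw [conjTranspose_mul]; simp only [Matrix.mul_assoc]
      _ = (1 - Bd * B)ᴴ * (B * (1 - Bd * B)) := by rw [← hB]
      _ = 0 := by rw [h5, mul_zero]
  have hzero : ∀ u, (E * (1 - Bd * B)) *ᵥ u = 0 := by
    intro u
    by_contra hu
    have hpos := hP.inv.dotProduct_mulVec_pos hu
    have hcalc : star ((E * (1 - Bd * B)) *ᵥ u) ⬝ᵥ
        (P⁻¹ *ᵥ ((E * (1 - Bd * B)) *ᵥ u)) = 0 := by
      rw [star_mulVec, ← dotProduct_mulVec, mulVec_mulVec, mulVec_mulVec, hC,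
        zero_mulVec, dotProduct_zero]
    rw [hcalc] at hpos
    exact lt_irrefl _ hpos
  have hz : E * (1 - Bd * B) = 0 := by
    ext i j
    have h := congrFun (hzero (Pi.single j 1)) i
    simpa using h
  rw [Matrix.mul_sub, Matrix.mul_one] at hz
  exact (sub_eq_zero.mp hz).symm

lemma stmt10_aux2 {p q : ℕ} (P : Matrix (Fin p) (Fin p) ℂ) (hP : P.PosDef)
    (E : Matrix (Fin p) (Fin q) ℂ) (B Bd : Matrix (Fin q) (Fin q) ℂ)
    (hB : B = Eᴴ * P⁻¹ * E) (h1 : B * Bd * B = B) :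
    B * (Bdᴴ * Eᴴ) = Eᴴ := by
  have hBH : Bᴴ = B := by
    rw [hB]
    simp only [conjTranspose_mul, conjTranspose_conjTranspose, hP.isHermitian.inv.eq]
    rw [Matrix.mul_assoc]
  have h := congrArg conjTranspose (stmt10_aux1 P hP E B Bd hB h1)
  rw [conjTranspose_mul, conjTranspose_mul, hBH] at h
  rw [← Matrix.mul_assoc]
  exact h

theorem stmt10 {p q : ℕ} (M P : Matrix (Fin p) (Fin p) ℂ)
    (hM : M.PosDef) (hP : P.PosDef)
    (E : Matrix (Fin p) (Fin q) ℂ) (ω₁ ω₂ τ : ℂ) (hτ : τ ≠ 0)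
    (B Bd : Matrix (Fin q) (Fin q) ℂ) (hB : B = Eᴴ * P⁻¹ * E)
    (h1 : B * Bd * B = B) (h2 : Bd * B * Bd = Bd)
    (h3 : (B * Bd)ᴴ = B * Bd) (h4 : (Bd * B)ᴴ = Bd * B) :
    let A : Matrix (Fin p ⊕ Fin q) (Fin p ⊕ Fin q) ℂ := fromBlocks M E (-Eᴴ) 0
    let Bwd : Matrix (Fin p ⊕ Fin q) (Fin p ⊕ Fin q) ℂ :=
      fromBlocks (M⁻¹ - (ω₁ * ω₂) • (M⁻¹ * E * Bd * Eᴴ * M⁻¹)) (-(ω₂ • (M⁻¹ * E * Bd)))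
        (ω₁ • (Bd * Eᴴ * M⁻¹)) Bd
    {x : Fin p ⊕ Fin q → ℂ | ((Bwd * A) * (Bwd * A)).mulVec x = 0} =
      {x : Fin p ⊕ Fin q → ℂ | (Bwd * A).mulVec x = 0} := by
  intro A Bwd
  have hdet : IsUnit M.det := (Matrix.isUnit_iff_isUnit_det M).mp hM.isUnit
  have hMM : M * M⁻¹ = 1 := Matrix.mul_nonsing_inv M hdet
  have hMM2 : M⁻¹ * M = 1 := Matrix.nonsing_inv_mul M hdet
  -- key block identity
  have KEY : (fromBlocks M (ω₂ • E) 0 1 :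
      Matrix (Fin p ⊕ Fin q) (Fin p ⊕ Fin q) ℂ) * Bwd =
      fromBlocks 1 0 (ω₁ • (Bd * Eᴴ * M⁻¹)) Bd := by
    show (fromBlocks M (ω₂ • E) 0 1) *
        fromBlocks (M⁻¹ - (ω₁ * ω₂) • (M⁻¹ * E * Bd * Eᴴ * M⁻¹)) (-(ω₂ • (M⁻¹ * E * Bd)))
          (ω₁ • (Bd * Eᴴ * M⁻¹)) Bd = fromBlocks 1 0 (ω₁ • (Bd * Eᴴ * M⁻¹)) Bd
    have c1 : M * (M⁻¹ * E * Bd * Eᴴ * M⁻¹) = E * (Bd * (Eᴴ * M⁻¹)) := by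
      simp only [← Matrix.mul_assoc]
      rw [hMM, Matrix.one_mul]
    have c2 : (ω₂ • E) * (ω₁ • (Bd * Eᴴ * M⁻¹)) = (ω₁ * ω₂) • (E * (Bd * (Eᴴ * M⁻¹))) := by
      rw [Matrix.smul_mul, Matrix.mul_smul, smul_smul, mul_comm ω₂ ω₁]
      simp only [Matrix.mul_assoc]
    have c3 : M * (M⁻¹ * E * Bd) = E * Bd := by
      simp only [← Matrix.mul_assoc]
      rw [hMM, Matrix.one_mul]
    have e11 : M * (M⁻¹ - (ω₁ * ω₂) • (M⁻¹ * E * Bd * Eᴴ * M⁻¹)) +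
        (ω₂ • E) * (ω₁ • (Bd * Eᴴ * M⁻¹)) = 1 := by
      rw [Matrix.mul_sub, hMM, Matrix.mul_smul, c1, c2]
      abel
    have e12 : M * (-(ω₂ • (M⁻¹ * E * Bd))) + (ω₂ • E) * Bd = 0 := by
      rw [Matrix.mul_neg, Matrix.mul_smul, c3, Matrix.smul_mul]
      abel
    have e21 : (0 : Matrix (Fin q) (Fin p) ℂ) *
        (M⁻¹ - (ω₁ * ω₂) • (M⁻¹ * E * Bd * Eᴴ * M⁻¹)) +
        (1 : Matrix (Fin q) (Fin q) ℂ) * (ω₁ • (Bd * Eᴴ * M⁻¹)) =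
        ω₁ • (Bd * Eᴴ * M⁻¹) := by
      rw [Matrix.zero_mul, Matrix.one_mul, zero_add]
    have e22 : (0 : Matrix (Fin q) (Fin p) ℂ) * (-(ω₂ • (M⁻¹ * E * Bd))) +
        (1 : Matrix (Fin q) (Fin q) ℂ) * Bd = Bd := by
      rw [Matrix.zero_mul, Matrix.one_mul, zero_add]
    rw [fromBlocks_multiply, e11, e12, e21, e22]
  -- auxiliary facts
  have auxE : B * (Bdᴴ * Eᴴ) = Eᴴ := stmt10_aux2 P hP E B Bd hB h1
  ext x
  simp only [Set.mem_setOf_eq]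
  constructor
  · intro hx
    -- y := (Bwd * A) *ᵥ x ; we must show y = 0
    set y : Fin p ⊕ Fin q → ℂ := (Bwd * A) *ᵥ x with hy
    have hyy : Bwd *ᵥ (A *ᵥ y) = 0 := by
      have h' : ((Bwd * A) * (Bwd * A)) *ᵥ x = (Bwd * A) *ᵥ ((Bwd * A) *ᵥ x) := by
        rw [mulVec_mulVec]
      rw [h'] at hx
      rw [← hy] at hx
      rw [← mulVec_mulVec] at hx
      exact hx
    -- components of y
    set u : Fin p → ℂ := y ∘ Sum.inl with hu
    set v : Fin q → ℂ := y ∘ Sum.inr with hv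
    -- components of A *ᵥ y
    have hAy : A *ᵥ y = Sum.elim (M *ᵥ u + E *ᵥ v)
        ((-Eᴴ) *ᵥ u + (0 : Matrix (Fin q) (Fin q) ℂ) *ᵥ v) := by
      show (fromBlocks M E (-Eᴴ) 0) *ᵥ y = _
      rw [fromBlocks_mulVec]
    set a : Fin p → ℂ := M *ᵥ u + E *ᵥ v with ha
    set b : Fin q → ℂ := (-Eᴴ) *ᵥ u + (0 : Matrix (Fin q) (Fin q) ℂ) *ᵥ v with hb
    have hb' : b = -(Eᴴ *ᵥ u) := by
      rw [hb, zero_mulVec, add_zero, neg_mulVec]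
    -- multiply hyy on the left by the triangular matrix
    have hLy : (fromBlocks 1 0 (ω₁ • (Bd * Eᴴ * M⁻¹)) Bd :
        Matrix (Fin p ⊕ Fin q) (Fin p ⊕ Fin q) ℂ) *ᵥ (A *ᵥ y) = 0 := by
      rw [← KEY, ← mulVec_mulVec, hyy, mulVec_zero]
    rw [hAy] at hLy
    rw [fromBlocks_mulVec] at hLy
    simp only [Sum.elim_comp_inl, Sum.elim_comp_inr] at hLy
    have ha0 : a = 0 := by
      funext i
      have h := congrFun hLy (Sum.inl i)
      simpa using h
    have hBdb : Bd *ᵥ b = 0 := by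
      funext i
      have h := congrFun hLy (Sum.inr i)
      simp only [Sum.elim_inr, Pi.zero_apply] at h
      rw [ha0] at h
      simpa using h
    -- step: Eᴴ *ᵥ u = 0
    have hBds : Bd *ᵥ (Eᴴ *ᵥ u) = 0 := by
      have h' : Bd *ᵥ b = Bd *ᵥ (-(Eᴴ *ᵥ u)) := by rw [hb']
      rw [mulVec_neg] at h'
      rw [h'] at hBdb
      exact neg_eq_zero.mp hBdb
    have hEu : Eᴴ *ᵥ u = 0 := by
      have hmat2 : B * (Bd * B * (Bdᴴ * Eᴴ)) = Eᴴ := by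
        calc B * (Bd * B * (Bdᴴ * Eᴴ)) = B * Bd * B * (Bdᴴ * Eᴴ) := by
              simp only [Matrix.mul_assoc]
          _ = B * (Bdᴴ * Eᴴ) := by rw [h1]
          _ = Eᴴ := auxE
      calc Eᴴ *ᵥ u = (B * (Bd * B * (Bdᴴ * Eᴴ))) *ᵥ u := by rw [hmat2]
        _ = B *ᵥ (Bd *ᵥ ((B * (Bdᴴ * Eᴴ)) *ᵥ u)) := by
            simp only [mulVec_mulVec, Matrix.mul_assoc]
        _ = B *ᵥ (Bd *ᵥ (Eᴴ *ᵥ u)) := by rw [auxE]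
        _ = 0 := by rw [hBds, mulVec_zero]
    -- step: u = 0
    have hu0 : u = 0 := by
      have hMu : star u ⬝ᵥ (M *ᵥ u) = 0 := by
        have h0 : star u ⬝ᵥ (M *ᵥ u) + star u ⬝ᵥ (E *ᵥ v) = 0 := by
          rw [← dotProduct_add, ← ha, ha0, dotProduct_zero]
        have hEv : star u ⬝ᵥ (E *ᵥ v) = 0 := by
          rw [dotProduct_mulVec]
          have h' : star u ᵥ* E = star (Eᴴ *ᵥ u) := by
            rw [star_mulVec, conjTranspose_conjTranspose]
          rw [h', hEu, star_zero, zero_dotProduct]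
        rw [hEv, add_zero] at h0
        exact h0
      have hMu0 : M *ᵥ u = 0 :=
        (hM.posSemidef.dotProduct_mulVec_zero_iff u).mp hMu
      calc u = (1 : Matrix (Fin p) (Fin p) ℂ) *ᵥ u := by rw [one_mulVec]
        _ = (M⁻¹ * M) *ᵥ u := by rw [hMM2]
        _ = M⁻¹ *ᵥ (M *ᵥ u) := by rw [← mulVec_mulVec]
        _ = 0 := by rw [hMu0, mulVec_zero]
    -- step: E *ᵥ v = 0
    have hEv0 : E *ᵥ v = 0 := by
      have h' := ha0
      rw [ha, hu0, mulVec_zero, zero_add] at h'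
      exact h'
    -- step: v = 0 using v ∈ range Bd
    have hv0 : v = 0 := by
      -- v is the inr component of Bwd *ᵥ (A *ᵥ x)
      set c : Fin p → ℂ := (A *ᵥ x) ∘ Sum.inl with hc
      set d : Fin q → ℂ := (A *ᵥ x) ∘ Sum.inr with hd
      have hyx : y = Bwd *ᵥ (A *ᵥ x) := by rw [hy, ← mulVec_mulVec]
      have hvform : v = (ω₁ • (Bd * Eᴴ * M⁻¹)) *ᵥ c + Bd *ᵥ d := by
        rw [hv, hyx]
        show ((fromBlocks (M⁻¹ - (ω₁ * ω₂) • (M⁻¹ * E * Bd * Eᴴ * M⁻¹)) (-(ω₂ • (M⁻¹ * E * Bd)))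
          (ω₁ • (Bd * Eᴴ * M⁻¹)) Bd) *ᵥ (A *ᵥ x)) ∘ Sum.inr = _
        rw [fromBlocks_mulVec]
        funext i
        simp [hc, hd]
      have hvBd : v = Bd *ᵥ (ω₁ • ((Eᴴ * M⁻¹) *ᵥ c) + d) := by
        rw [hvform, mulVec_add, mulVec_smul]
        congr 1
        rw [smul_mulVec, mulVec_mulVec, Matrix.mul_assoc]
      have hBv : B *ᵥ v = 0 := by
        rw [hB, ← mulVec_mulVec, hEv0, mulVec_zero]
      calc v = Bd *ᵥ (ω₁ • ((Eᴴ * M⁻¹) *ᵥ c) + d) := hvBd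
        _ = (Bd * B * Bd) *ᵥ (ω₁ • ((Eᴴ * M⁻¹) *ᵥ c) + d) := by rw [h2]
        _ = Bd *ᵥ (B *ᵥ (Bd *ᵥ (ω₁ • ((Eᴴ * M⁻¹) *ᵥ c) + d))) := by
            simp only [mulVec_mulVec, Matrix.mul_assoc]
        _ = Bd *ᵥ (B *ᵥ v) := by rw [← hvBd]
        _ = 0 := by rw [hBv, mulVec_zero]
    funext i
    cases i with
    | inl i => exact congrFun hu0 i
    | inr i => exact congrFun hv0 i
  · intro hx
    rw [← mulVec_mulVec, hx, mulVec_zero]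
end

section
/- Let E ∈ ℂ^{p×q} with rank r, and let E = U (E_r, 0) Vᴴ be its singular value decomposition with U, V unitary and E_r = (Σ_r; 0) ∈ ℂ^{p×r}, where Σ_r = diag(σ₁,…,σ_r) with σᵢ > 0. Let P ∈ ℂ^{p×p} be Hermitian positive definite and B = EᴴP⁻¹E. Then B = V diag(Σ_r P̂ Σ_r, 0) Vᴴ and B† = V diag((Σ_r P̂ Σ_r)⁻¹, 0) Vᴴ, where P̂ = U₁ᴴ P⁻¹ U₁ with U₁ the first r columns of U. In particular Σ_r P̂ Σ_r is Hermitian positive definite. -/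
open Matrix
open scoped ComplexOrder

/-- conjugation of a positive definite matrix by an injective map is positive definite -/
lemma posDef_conj_aux {n m : Type*} [Fintype n] [Fintype m] [DecidableEq n] [DecidableEq m]
    {A : Matrix n n ℂ} (hA : A.PosDef) (B : Matrix n m ℂ)
    (hB : Function.Injective B.mulVec) : (Bᴴ * A * B).PosDef := by
  refine Matrix.PosDef.of_dotProduct_mulVec_pos (Matrix.isHermitian_conjTranspose_mul_mul B hA.1) fun x hx => ?_
  have hy : B *ᵥ x ≠ 0 := by
    intro h
    exact hx (hB (h.trans (Matrix.mulVec_zero B).symm))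
  simpa only [star_mulVec, dotProduct_mulVec, Matrix.vecMul_vecMul] using hA.dotProduct_mulVec_pos hy

theorem stmt11 {r s t : ℕ}
    (U : Matrix (Fin r ⊕ Fin t) (Fin r ⊕ Fin t) ℂ)
    (hU : Uᴴ * U = 1) (hU' : U * Uᴴ = 1)
    (V : Matrix (Fin r ⊕ Fin s) (Fin r ⊕ Fin s) ℂ)
    (hV : Vᴴ * V = 1) (hV' : V * Vᴴ = 1)
    (σ : Fin r → ℝ) (hσ : ∀ i, 0 < σ i)
    (E : Matrix (Fin r ⊕ Fin t) (Fin r ⊕ Fin s) ℂ)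
    (hE : E = U * (fromBlocks (diagonal fun i => (σ i : ℂ)) 0 0 0 :
      Matrix (Fin r ⊕ Fin t) (Fin r ⊕ Fin s) ℂ) * Vᴴ)
    (hrank : E.rank = r)
    (P : Matrix (Fin r ⊕ Fin t) (Fin r ⊕ Fin t) ℂ) (hP : P.PosDef)
    (B : Matrix (Fin r ⊕ Fin s) (Fin r ⊕ Fin s) ℂ) (hB : B = Eᴴ * P⁻¹ * E) :
    let Sr : Matrix (Fin r) (Fin r) ℂ := diagonal fun i => (σ i : ℂ)
    let U₁ : Matrix (Fin r ⊕ Fin t) (Fin r) ℂ := U.submatrix id Sum.inl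
    let Phat : Matrix (Fin r) (Fin r) ℂ := U₁ᴴ * P⁻¹ * U₁
    let S : Matrix (Fin r) (Fin r) ℂ := Sr * Phat * Sr
    let Bd : Matrix (Fin r ⊕ Fin s) (Fin r ⊕ Fin s) ℂ := V * fromBlocks S⁻¹ 0 0 0 * Vᴴ
    B = V * fromBlocks S 0 0 0 * Vᴴ ∧
    S.PosDef ∧
    (B * Bd * B = B ∧ Bd * B * Bd = Bd ∧ (B * Bd)ᴴ = B * Bd ∧ (Bd * B)ᴴ = Bd * B) := by
  intro Sr U₁ Phat S Bd
  set D : Matrix (Fin r ⊕ Fin t) (Fin r ⊕ Fin s) ℂ :=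
    fromBlocks (diagonal fun i => (σ i : ℂ)) 0 0 0 with hD
  -- Sr is Hermitian
  have hSr : Srᴴ = Sr := by
    show (diagonal fun i => (σ i : ℂ))ᴴ = _
    rw [diagonal_conjTranspose]
    have h1 : (star fun i => ((σ i : ℂ))) = fun i => ((σ i : ℂ)) := by
      funext i; exact Complex.conj_ofReal _
    rw [h1]
  -- Sr is positive definite hence invertible
  have hSrPD : Sr.PosDef := by
    rw [show Sr = diagonal fun i => (σ i : ℂ) from rfl, posDef_diagonal_iff]
    exact fun i => Complex.zero_lt_real.mpr (hσ i)
  have hSrUnit : IsUnit Sr.det := isUnit_iff_ne_zero.mpr hSrPD.det_pos.ne'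
  have hSrInj : Function.Injective Sr.mulVec :=
    mulVec_injective_iff_isUnit.mpr hSrPD.isUnit
  -- P⁻¹ is positive definite
  have hPinv : (P⁻¹).PosDef := hP.inv
  -- U₁ has orthonormal columns hence injective mulVec
  have hU₁ : U₁ᴴ * U₁ = 1 := by
    ext i j
    have := congrFun (congrFun hU (Sum.inl i)) (Sum.inl j)
    simp only [mul_apply, Fintype.sum_sum_type] at this ⊢
    simpa [U₁, conjTranspose_apply, one_apply] using this
  have hU₁inj : Function.Injective U₁.mulVec := by
    intro x y h
    have : U₁ᴴ *ᵥ (U₁ *ᵥ x) = U₁ᴴ *ᵥ (U₁ *ᵥ y) := by rw [h]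
    simpa [Matrix.mulVec_mulVec, hU₁] using this
  -- Phat is positive definite
  have hPhat : Phat.PosDef := posDef_conj_aux hPinv U₁ hU₁inj
  -- S is positive definite
  have hS : S.PosDef := by
    have := posDef_conj_aux hPhat Sr hSrInj
    rwa [hSr] at this
  have hSdet : IsUnit S.det := isUnit_iff_ne_zero.mpr hS.det_pos.ne'
  have hSinv : S * S⁻¹ = 1 := mul_nonsing_inv S hSdet
  have hSinv' : S⁻¹ * S = 1 := nonsing_inv_mul S hSdet
  -- Phat equals the top-left block of Uᴴ * P⁻¹ * U
  have hPhatEq : Phat = (Uᴴ * P⁻¹ * U).toBlocks₁₁ := by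
    ext i j
    simp [Phat, U₁, toBlocks₁₁, mul_apply, conjTranspose_apply]
  -- the key computation
  have hkey : Dᴴ * (Uᴴ * P⁻¹ * U) * D = fromBlocks S 0 0 0 := by
    have hDH : Dᴴ = fromBlocks Sr 0 0 0 := by
      rw [hD, fromBlocks_conjTranspose]
      simp [hSr]
      exact (diagonal_conjTranspose _).symm.trans hSr
    rw [hDH, hD, ← fromBlocks_toBlocks (Uᴴ * P⁻¹ * U), fromBlocks_multiply,
      fromBlocks_multiply]
    simp only [Matrix.mul_zero, Matrix.zero_mul, add_zero, zero_add]
    rw [← hPhatEq]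
  -- main equality for B
  have hmain : B = V * fromBlocks S 0 0 0 * Vᴴ := by
    rw [hB, hE]
    have : (U * D * Vᴴ)ᴴ = V * Dᴴ * Uᴴ := by
      simp [conjTranspose_mul, Matrix.mul_assoc]
    rw [this]
    calc V * Dᴴ * Uᴴ * P⁻¹ * (U * D * Vᴴ)
        = V * (Dᴴ * (Uᴴ * P⁻¹ * U) * D) * Vᴴ := by
          simp only [Matrix.mul_assoc]
      _ = V * fromBlocks S 0 0 0 * Vᴴ := by rw [hkey]
  -- general multiplication lemma
  have hVc : ∀ Z : Matrix (Fin r ⊕ Fin s) (Fin r ⊕ Fin s) ℂ, Vᴴ * (V * Z) = Z := by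
    intro Z; rw [← Matrix.mul_assoc, hV, Matrix.one_mul]
  have hmul : ∀ X Y : Matrix (Fin r) (Fin r) ℂ,
      (V * fromBlocks X 0 0 0 * Vᴴ) * (V * fromBlocks Y 0 0 0 * Vᴴ) =
      V * fromBlocks (X * Y) 0 0 0 * Vᴴ := by
    intro X Y
    calc (V * fromBlocks X 0 0 0 * Vᴴ) * (V * fromBlocks Y 0 0 0 * Vᴴ)
        = V * (fromBlocks X 0 0 0 * (fromBlocks Y 0 0 0 * Vᴴ)) := by
          simp only [Matrix.mul_assoc]; rw [hVc]
      _ = V * fromBlocks (X * Y) 0 0 0 * Vᴴ := by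
          rw [← Matrix.mul_assoc (fromBlocks X 0 0 0), fromBlocks_multiply]
          simp [Matrix.mul_assoc]
  have hBd : Bd = V * fromBlocks S⁻¹ 0 0 0 * Vᴴ := rfl
  refine ⟨hmain, hS, ?_, ?_, ?_, ?_⟩
  · rw [hmain, hBd, hmul, hmul, hSinv, Matrix.one_mul]
  · rw [hmain, hBd, hmul, hmul, hSinv', Matrix.one_mul]
  · rw [hmain, hBd, hmul, hSinv]
    simp only [conjTranspose_mul, fromBlocks_conjTranspose, conjTranspose_conjTranspose,
      conjTranspose_one, conjTranspose_zero, Matrix.mul_assoc]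
  · rw [hmain, hBd, hmul, hSinv']
    simp only [conjTranspose_mul, fromBlocks_conjTranspose, conjTranspose_conjTranspose,
      conjTranspose_one, conjTranspose_zero, Matrix.mul_assoc]
end

section
/- Let B = Eᴴ P⁻¹ E with P ∈ ℂ^{p×p} Hermitian positive definite and E ∈ ℂ^{p×q}. Define the block matrix X = [[M⁻¹ - ω₁ω₂M⁻¹EB†EᴴM⁻¹, -ω₂M⁻¹EB†], [ω₁B†EᴴM⁻¹, B†]] where M is Hermitian positive definite and B† is the Moore–Penrose inverse of B. Then X is the Moore–Penrose inverse of B(ω₁,ω₂) = [[M, ω₂E], [-ω₁Eᴴ, B - ω₁ω₂EᴴM⁻¹E]], i.e., X satisfies the four Penrose equations with B(ω₁,ω₂). -/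
open Matrix
open scoped ComplexOrder

theorem aux_zero {n m : ℕ} (N : Matrix (Fin n) (Fin n) ℂ) (hN : N.PosDef)
    (A : Matrix (Fin m) (Fin n) ℂ) (h : A * N * Aᴴ = 0) : A = 0 := by
  have hrow : ∀ i, A i = 0 := by
    intro i
    by_contra hi
    have hx : star (A i) ≠ 0 := by
      intro hz
      exact hi (by simpa using congrArg star hz)
    have hpos := hN.dotProduct_mulVec_pos hx
    rw [star_star] at hpos
    have heq : (A * N * Aᴴ) i i = A i ⬝ᵥ N *ᵥ star (A i) := by
      simp [mul_apply, dotProduct, mulVec, Finset.mul_sum, Finset.sum_mul, conjTranspose_apply]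
      rw [Finset.sum_comm]
      congr 1; ext k; congr 1; ext l; ring
    rw [h] at heq
    simp at heq
    rw [← heq] at hpos
    exact lt_irrefl _ hpos
  ext i j
  simpa using congrFun (hrow i) j

theorem stmt16 {p q : ℕ} (M P : Matrix (Fin p) (Fin p) ℂ)
    (hM : M.PosDef) (hP : P.PosDef)
    (E : Matrix (Fin p) (Fin q) ℂ) (ω₁ ω₂ : ℂ)
    (B Bd : Matrix (Fin q) (Fin q) ℂ) (hB : B = Eᴴ * P⁻¹ * E)
    (h1 : B * Bd * B = B) (h2 : Bd * B * Bd = Bd)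
    (h3 : (B * Bd)ᴴ = B * Bd) (h4 : (Bd * B)ᴴ = Bd * B) :
    let Y : Matrix (Fin p ⊕ Fin q) (Fin p ⊕ Fin q) ℂ :=
      fromBlocks M (ω₂ • E) (-(ω₁ • Eᴴ)) (B - (ω₁ * ω₂) • (Eᴴ * M⁻¹ * E))
    let X : Matrix (Fin p ⊕ Fin q) (Fin p ⊕ Fin q) ℂ :=
      fromBlocks (M⁻¹ - (ω₁ * ω₂) • (M⁻¹ * E * Bd * Eᴴ * M⁻¹)) (-(ω₂ • (M⁻¹ * E * Bd)))
        (ω₁ • (Bd * Eᴴ * M⁻¹)) Bd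
    Y * X * Y = Y ∧ X * Y * X = X ∧ (Y * X)ᴴ = Y * X ∧ (X * Y)ᴴ = X * Y := by
  intro Y X
  have hMi : M * M⁻¹ = 1 := mul_nonsing_inv _ (isUnit_iff_isUnit_det _ |>.1 hM.isUnit)
  have hiM : M⁻¹ * M = 1 := nonsing_inv_mul _ (isUnit_iff_isUnit_det _ |>.1 hM.isUnit)
  -- B is Hermitian
  have hBH : Bᴴ = B := by
    rw [hB]
    simp only [conjTranspose_mul, conjTranspose_conjTranspose, hP.isHermitian.inv.eq,
      Matrix.mul_assoc]
  -- key identity : B * Bd * Eᴴ = Eᴴ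
  have hBG : B * (B * Bd) = B := by
    have h' : (B * (B * Bd))ᴴ = B := by
      rw [conjTranspose_mul, h3, hBH, Matrix.mul_assoc, ← Matrix.mul_assoc]
      exact h1
    calc B * (B * Bd) = (B * (B * Bd))ᴴᴴ := (conjTranspose_conjTranspose _).symm
      _ = Bᴴ := by rw [h']
      _ = B := hBH
  have h1' : B * (Bd * B) = B := by rw [← Matrix.mul_assoc]; exact h1
  have key1 : B * Bd * Eᴴ = Eᴴ := by
    have f1 : Eᴴ * (P⁻¹ * E) = B := by rw [← Matrix.mul_assoc]; exact hB.symm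
    have f1' : ∀ A : Matrix (Fin q) (Fin q) ℂ, Eᴴ * (P⁻¹ * (E * A)) = B * A := by
      intro A
      rw [← Matrix.mul_assoc, ← Matrix.mul_assoc, ← hB]
    have hz : (Eᴴ - B * Bd * Eᴴ) * P⁻¹ * (Eᴴ - B * Bd * Eᴴ)ᴴ = 0 := by
      have hct : (Eᴴ - B * Bd * Eᴴ)ᴴ = E - E * (B * Bd) := by
        simp only [conjTranspose_sub, conjTranspose_mul, conjTranspose_conjTranspose]
        rw [← conjTranspose_mul, h3]
      rw [hct, Matrix.sub_mul, Matrix.sub_mul, Matrix.mul_sub, Matrix.mul_sub]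
      simp only [Matrix.mul_assoc, f1, f1', hBG, h1']
      abel
    have h0 := aux_zero _ hP.inv _ hz
    exact (sub_eq_zero.mp h0).symm
  -- Bd is Hermitian
  have g3 : Bdᴴ * B = B * Bd := by
    have := h3
    rw [conjTranspose_mul, hBH] at this
    exact this
  have g4 : B * Bdᴴ = Bd * B := by
    have := h4
    rw [conjTranspose_mul, hBH] at this
    exact this
  have p2' : Bdᴴ * (B * Bdᴴ) = Bdᴴ := by
    have := congrArg conjTranspose h2
    rw [conjTranspose_mul, conjTranspose_mul, hBH] at this
    exact this
  have c1 : B * Bd = B * Bdᴴ := by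
    calc B * Bd = (B * Bd)ᴴ := h3.symm
      _ = Bdᴴ * Bᴴ := conjTranspose_mul _ _
      _ = Bdᴴ * B := by rw [hBH]
      _ = Bdᴴ * (B * Bd * B) := by rw [h1]
      _ = Bdᴴ * (B * (Bd * B)) := by rw [Matrix.mul_assoc B Bd B]
      _ = (Bdᴴ * B) * (Bd * B) := (Matrix.mul_assoc _ _ _).symm
      _ = (B * Bd) * (B * Bdᴴ) := by rw [g3, g4]
      _ = (B * Bd * B) * Bdᴴ := (Matrix.mul_assoc _ _ _).symm
      _ = B * Bdᴴ := by rw [h1]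
  have c2 : Bd * B = Bdᴴ * B := by
    rw [← g4, ← c1, ← g3]
  have hBdH : Bdᴴ = Bd := by
    calc Bdᴴ = Bdᴴ * (B * Bdᴴ) := p2'.symm
      _ = (Bdᴴ * B) * Bdᴴ := by rw [Matrix.mul_assoc]
      _ = (Bd * B) * Bdᴴ := by rw [c2]
      _ = Bd * (B * Bdᴴ) := by rw [Matrix.mul_assoc]
      _ = Bd * (B * Bd) := by rw [c1]
      _ = Bd := by rw [← Matrix.mul_assoc, h2]
  -- key identity : E * Bd * B = E
  have key2 : E * Bd * B = E := by
    have : (E * Bd * B)ᴴ = Eᴴ := by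
      rw [conjTranspose_mul, conjTranspose_mul, hBH, hBdH, ← Matrix.mul_assoc]
      exact key1
    calc E * Bd * B = (E * Bd * B)ᴴᴴ := (conjTranspose_conjTranspose _).symm
      _ = Eᴴᴴ := by rw [this]
      _ = E := conjTranspose_conjTranspose _
  -- generalized helper rewrite rules
  have hMMi : ∀ {n : Type} (A : Matrix (Fin p) n ℂ), M * (M⁻¹ * A) = A := by
    intro n A; rw [← Matrix.mul_assoc, hMi, Matrix.one_mul]
  have hiMM : ∀ {n : Type} (A : Matrix (Fin p) n ℂ), M⁻¹ * (M * A) = A := by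
    intro n A; rw [← Matrix.mul_assoc, hiM, Matrix.one_mul]
  have k1 : ∀ {n : Type} (A : Matrix (Fin p) n ℂ), B * (Bd * (Eᴴ * A)) = Eᴴ * A := by
    intro n A; rw [← Matrix.mul_assoc, ← Matrix.mul_assoc, key1]
  have k1b : B * (Bd * Eᴴ) = Eᴴ := by rw [← Matrix.mul_assoc, key1]
  have k2 : E * (Bd * B) = E := by rw [← Matrix.mul_assoc, key2]
  have h2' : Bd * (B * Bd) = Bd := by rw [← Matrix.mul_assoc, h2]
  have h2g : ∀ {n : Type} (A : Matrix (Fin q) n ℂ), Bd * (B * (Bd * A)) = Bd * A := by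
    intro n A; rw [← Matrix.mul_assoc, ← Matrix.mul_assoc, h2]
  -- the two key block products
  have hYX : Y * X = fromBlocks 1 0 0 (B * Bd) := by
    have t11 : M * (M⁻¹ - (ω₁ * ω₂) • (M⁻¹ * E * Bd * Eᴴ * M⁻¹)) +
        (ω₂ • E) * (ω₁ • (Bd * Eᴴ * M⁻¹)) = 1 := by
      simp only [Matrix.mul_sub, Matrix.sub_mul, Matrix.mul_smul, Matrix.smul_mul, Matrix.mul_neg, Matrix.neg_mul, Matrix.mul_one, Matrix.one_mul, Matrix.mul_zero, Matrix.zero_mul, Matrix.mul_assoc, smul_smul, hMMi, hiMM, hMi, hiM, k1, k1b, k2, h1', h2', h2g, add_zero, zero_add, smul_sub, smul_neg, neg_neg, sub_zero]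
      try module
    have t12 : M * (-(ω₂ • (M⁻¹ * E * Bd))) + (ω₂ • E) * Bd = 0 := by
      simp only [Matrix.mul_sub, Matrix.sub_mul, Matrix.mul_smul, Matrix.smul_mul, Matrix.mul_neg, Matrix.neg_mul, Matrix.mul_one, Matrix.one_mul, Matrix.mul_zero, Matrix.zero_mul, Matrix.mul_assoc, smul_smul, hMMi, hiMM, hMi, hiM, k1, k1b, k2, h1', h2', h2g, add_zero, zero_add, smul_sub, smul_neg, neg_neg, sub_zero]
      try module
    have t21 : (-(ω₁ • Eᴴ)) * (M⁻¹ - (ω₁ * ω₂) • (M⁻¹ * E * Bd * Eᴴ * M⁻¹)) +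
        (B - (ω₁ * ω₂) • (Eᴴ * M⁻¹ * E)) * (ω₁ • (Bd * Eᴴ * M⁻¹)) = 0 := by
      simp only [Matrix.mul_sub, Matrix.sub_mul, Matrix.mul_smul, Matrix.smul_mul, Matrix.mul_neg, Matrix.neg_mul, Matrix.mul_one, Matrix.one_mul, Matrix.mul_zero, Matrix.zero_mul, Matrix.mul_assoc, smul_smul, hMMi, hiMM, hMi, hiM, k1, k1b, k2, h1', h2', h2g, add_zero, zero_add, smul_sub, smul_neg, neg_neg, sub_zero]
      try module
    have t22 : (-(ω₁ • Eᴴ)) * (-(ω₂ • (M⁻¹ * E * Bd))) +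
        (B - (ω₁ * ω₂) • (Eᴴ * M⁻¹ * E)) * Bd = B * Bd := by
      simp only [Matrix.mul_sub, Matrix.sub_mul, Matrix.mul_smul, Matrix.smul_mul, Matrix.mul_neg, Matrix.neg_mul, Matrix.mul_one, Matrix.one_mul, Matrix.mul_zero, Matrix.zero_mul, Matrix.mul_assoc, smul_smul, hMMi, hiMM, hMi, hiM, k1, k1b, k2, h1', h2', h2g, add_zero, zero_add, smul_sub, smul_neg, neg_neg, sub_zero]
      try module
    show fromBlocks M (ω₂ • E) (-(ω₁ • Eᴴ)) (B - (ω₁ * ω₂) • (Eᴴ * M⁻¹ * E)) *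
        fromBlocks (M⁻¹ - (ω₁ * ω₂) • (M⁻¹ * E * Bd * Eᴴ * M⁻¹)) (-(ω₂ • (M⁻¹ * E * Bd)))
          (ω₁ • (Bd * Eᴴ * M⁻¹)) Bd = fromBlocks 1 0 0 (B * Bd)
    rw [fromBlocks_multiply, t11, t12, t21, t22]
  have hXY : X * Y = fromBlocks 1 0 0 (Bd * B) := by
    have u11 : (M⁻¹ - (ω₁ * ω₂) • (M⁻¹ * E * Bd * Eᴴ * M⁻¹)) * M +
        (-(ω₂ • (M⁻¹ * E * Bd))) * (-(ω₁ • Eᴴ)) = 1 := by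
      simp only [Matrix.mul_sub, Matrix.sub_mul, Matrix.mul_smul, Matrix.smul_mul, Matrix.mul_neg, Matrix.neg_mul, Matrix.mul_one, Matrix.one_mul, Matrix.mul_zero, Matrix.zero_mul, Matrix.mul_assoc, smul_smul, hMMi, hiMM, hMi, hiM, k1, k1b, k2, h1', h2', h2g, add_zero, zero_add, smul_sub, smul_neg, neg_neg, sub_zero]
      try module
    have u12 : (M⁻¹ - (ω₁ * ω₂) • (M⁻¹ * E * Bd * Eᴴ * M⁻¹)) * (ω₂ • E) +
        (-(ω₂ • (M⁻¹ * E * Bd))) * (B - (ω₁ * ω₂) • (Eᴴ * M⁻¹ * E)) = 0 := by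
      simp only [Matrix.mul_sub, Matrix.sub_mul, Matrix.mul_smul, Matrix.smul_mul, Matrix.mul_neg, Matrix.neg_mul, Matrix.mul_one, Matrix.one_mul, Matrix.mul_zero, Matrix.zero_mul, Matrix.mul_assoc, smul_smul, hMMi, hiMM, hMi, hiM, k1, k1b, k2, h1', h2', h2g, add_zero, zero_add, smul_sub, smul_neg, neg_neg, sub_zero]
      try module
    have u21 : (ω₁ • (Bd * Eᴴ * M⁻¹)) * M + Bd * (-(ω₁ • Eᴴ)) = 0 := by
      simp only [Matrix.mul_sub, Matrix.sub_mul, Matrix.mul_smul, Matrix.smul_mul, Matrix.mul_neg, Matrix.neg_mul, Matrix.mul_one, Matrix.one_mul, Matrix.mul_zero, Matrix.zero_mul, Matrix.mul_assoc, smul_smul, hMMi, hiMM, hMi, hiM, k1, k1b, k2, h1', h2', h2g, add_zero, zero_add, smul_sub, smul_neg, neg_neg, sub_zero]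
      try module
    have u22 : (ω₁ • (Bd * Eᴴ * M⁻¹)) * (ω₂ • E) +
        Bd * (B - (ω₁ * ω₂) • (Eᴴ * M⁻¹ * E)) = Bd * B := by
      simp only [Matrix.mul_sub, Matrix.sub_mul, Matrix.mul_smul, Matrix.smul_mul, Matrix.mul_neg, Matrix.neg_mul, Matrix.mul_one, Matrix.one_mul, Matrix.mul_zero, Matrix.zero_mul, Matrix.mul_assoc, smul_smul, hMMi, hiMM, hMi, hiM, k1, k1b, k2, h1', h2', h2g, add_zero, zero_add, smul_sub, smul_neg, neg_neg, sub_zero]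
      try module
    show fromBlocks (M⁻¹ - (ω₁ * ω₂) • (M⁻¹ * E * Bd * Eᴴ * M⁻¹)) (-(ω₂ • (M⁻¹ * E * Bd)))
          (ω₁ • (Bd * Eᴴ * M⁻¹)) Bd *
        fromBlocks M (ω₂ • E) (-(ω₁ • Eᴴ)) (B - (ω₁ * ω₂) • (Eᴴ * M⁻¹ * E)) =
        fromBlocks 1 0 0 (Bd * B)
    rw [fromBlocks_multiply, u11, u12, u21, u22]
  refine ⟨?_, ?_, ?_, ?_⟩
  · rw [hYX]
    have v21 : (0 : Matrix (Fin q) (Fin p) ℂ) * M + (B * Bd) * (-(ω₁ • Eᴴ)) = -(ω₁ • Eᴴ) := by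
      simp only [Matrix.mul_sub, Matrix.sub_mul, Matrix.mul_smul, Matrix.smul_mul, Matrix.mul_neg, Matrix.neg_mul, Matrix.mul_one, Matrix.one_mul, Matrix.mul_zero, Matrix.zero_mul, Matrix.mul_assoc, smul_smul, hMMi, hiMM, hMi, hiM, k1, k1b, k2, h1', h2', h2g, add_zero, zero_add, smul_sub, smul_neg, neg_neg, sub_zero]
      try module
    have v22 : (0 : Matrix (Fin q) (Fin p) ℂ) * (ω₂ • E) +
        (B * Bd) * (B - (ω₁ * ω₂) • (Eᴴ * M⁻¹ * E)) = B - (ω₁ * ω₂) • (Eᴴ * M⁻¹ * E) := by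
      simp only [Matrix.mul_sub, Matrix.sub_mul, Matrix.mul_smul, Matrix.smul_mul, Matrix.mul_neg, Matrix.neg_mul, Matrix.mul_one, Matrix.one_mul, Matrix.mul_zero, Matrix.zero_mul, Matrix.mul_assoc, smul_smul, hMMi, hiMM, hMi, hiM, k1, k1b, k2, h1', h2', h2g, add_zero, zero_add, smul_sub, smul_neg, neg_neg, sub_zero]
      try module
    show fromBlocks 1 0 0 (B * Bd) *
        fromBlocks M (ω₂ • E) (-(ω₁ • Eᴴ)) (B - (ω₁ * ω₂) • (Eᴴ * M⁻¹ * E)) =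
        fromBlocks M (ω₂ • E) (-(ω₁ • Eᴴ)) (B - (ω₁ * ω₂) • (Eᴴ * M⁻¹ * E))
    rw [fromBlocks_multiply, v21, v22]
    simp only [Matrix.one_mul, Matrix.mul_zero, Matrix.zero_mul, add_zero, zero_add]
  · rw [hXY]
    have w21 : (0 : Matrix (Fin q) (Fin p) ℂ) *
          (M⁻¹ - (ω₁ * ω₂) • (M⁻¹ * E * Bd * Eᴴ * M⁻¹)) +
        (Bd * B) * (ω₁ • (Bd * Eᴴ * M⁻¹)) = ω₁ • (Bd * Eᴴ * M⁻¹) := by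
      simp only [Matrix.mul_sub, Matrix.sub_mul, Matrix.mul_smul, Matrix.smul_mul, Matrix.mul_neg, Matrix.neg_mul, Matrix.mul_one, Matrix.one_mul, Matrix.mul_zero, Matrix.zero_mul, Matrix.mul_assoc, smul_smul, hMMi, hiMM, hMi, hiM, k1, k1b, k2, h1', h2', h2g, add_zero, zero_add, smul_sub, smul_neg, neg_neg, sub_zero]
      try module
    have w22 : (0 : Matrix (Fin q) (Fin p) ℂ) * (-(ω₂ • (M⁻¹ * E * Bd))) +
        (Bd * B) * Bd = Bd := by
      simp only [Matrix.mul_sub, Matrix.sub_mul, Matrix.mul_smul, Matrix.smul_mul, Matrix.mul_neg, Matrix.neg_mul, Matrix.mul_one, Matrix.one_mul, Matrix.mul_zero, Matrix.zero_mul, Matrix.mul_assoc, smul_smul, hMMi, hiMM, hMi, hiM, k1, k1b, k2, h1', h2', h2g, add_zero, zero_add, smul_sub, smul_neg, neg_neg, sub_zero]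
      try module
    show fromBlocks 1 0 0 (Bd * B) *
        fromBlocks (M⁻¹ - (ω₁ * ω₂) • (M⁻¹ * E * Bd * Eᴴ * M⁻¹)) (-(ω₂ • (M⁻¹ * E * Bd)))
          (ω₁ • (Bd * Eᴴ * M⁻¹)) Bd =
        fromBlocks (M⁻¹ - (ω₁ * ω₂) • (M⁻¹ * E * Bd * Eᴴ * M⁻¹)) (-(ω₂ • (M⁻¹ * E * Bd)))
          (ω₁ • (Bd * Eᴴ * M⁻¹)) Bd
    rw [fromBlocks_multiply, w21, w22]
    simp only [Matrix.one_mul, Matrix.mul_zero, Matrix.zero_mul, add_zero, zero_add]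
  · rw [hYX, fromBlocks_conjTranspose]
    simp only [conjTranspose_one, conjTranspose_zero, h3]
  · rw [hXY, fromBlocks_conjTranspose]
    simp only [conjTranspose_one, conjTranspose_zero, h4]
end
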